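/- For all integers s ≥ 0 and t ≥ 0, setting p = 2s+1 and r = 2t+1, the following identity of rational numbers holds: 2^p · ∏_{i=1}^{r−1} (3p+3i+1)! / ( (3p+2i+1)! (p+2i)! ) · ∏_{i=1}^{t} (2p+2i)! (2i−1)! = [ A(p+r) · S(2(p+r), p) ] / [ A(p) · S(2p, p) ], where A(n) = ∏_{k=0}^{n−1} (3k+1)!/(n+k)! and, for odd p, S(L,p) = ∏_{ℓ=1}^{(p+1)/2} ∏_{k=ℓ}^{2ℓ−2} (L²−4k²) / ∏_{ℓ=0}^{(p−3)/2} (L² − (2ℓ+1)²)^{(p−1)/2−ℓ}. -/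

import Mathlib

open Finset

/-- The alternating sign matrix numbers A(n) = ∏_{k=0}^{n-1} (3k+1)!/(n+k)! (as a rational). -/
def ASM (n : ℕ) : ℚ :=
  ∏ k ∈ Finset.range n, ((3 * k + 1).factorial : ℚ) / ((n + k).factorial : ℚ)

/-- S(L, p) for even p = 2s:
S(L,p) = ∏_{ℓ=1}^{p/2} ∏_{k=ℓ}^{2ℓ−1} (L²−4k²) / ∏_{ℓ=0}^{p/2−1} (L²−(2ℓ+1)²)^(p/2−ℓ). -/
def SEven (L : ℕ) (s : ℕ) : ℚ :=
  (∏ l ∈ Finset.Icc 1 s, ∏ k ∈ Finset.Icc l (2 * l - 1),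
      ((L : ℚ) ^ 2 - 4 * (k : ℚ) ^ 2)) /
    ∏ l ∈ Finset.range s, ((L : ℚ) ^ 2 - (2 * (l : ℚ) + 1) ^ 2) ^ (s - l)

/-- S(L, p) for odd p = 2s+1:
S(L,p) = ∏_{ℓ=1}^{(p+1)/2} ∏_{k=ℓ}^{2ℓ−2} (L²−4k²) / ∏_{ℓ=0}^{(p−3)/2} (L²−(2ℓ+1)²)^((p−1)/2−ℓ). -/
def SOdd (L : ℕ) (s : ℕ) : ℚ :=
  (∏ l ∈ Finset.Icc 1 (s + 1), ∏ k ∈ Finset.Icc l (2 * l - 2),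
      ((L : ℚ) ^ 2 - 4 * (k : ℚ) ^ 2)) /
    ∏ l ∈ Finset.range s, ((L : ℚ) ^ 2 - (2 * (l : ℚ) + 1) ^ 2) ^ (s - l)


lemma factq (n : ℕ) : ((n+1).factorial : ℚ) = (n+1) * (n.factorial : ℚ) := by
  rw [Nat.factorial_succ]; push_cast; ring

lemma factne (n : ℕ) : ((n.factorial : ℚ)) ≠ 0 := by
  exact_mod_cast n.factorial_ne_zero

lemma prodAsc (a n : ℕ) : (∏ j ∈ range n, ((a:ℚ)+1+j)) * (a.factorial : ℚ)
    = ((a+n).factorial : ℚ) := by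
  induction n with
  | zero => simp
  | succ n ih =>
      rw [prod_range_succ, show a + (n+1) = (a+n)+1 by ring, factq]
      push_cast at ih ⊢
      linear_combination ((a:ℚ)+n+1) * ih

lemma prodAscOdd (a n : ℕ) : (∏ j ∈ range n, (2*(a:ℚ)+1+2*j)) *
    ((2:ℚ)^n * (((a+n).factorial : ℚ)) * (((2*a).factorial : ℚ)))
    = ((2*a+2*n).factorial : ℚ) * (a.factorial : ℚ) := by
  induction n with
  | zero => simp [mul_comm]
  | succ n ih =>
      rw [prod_range_succ, show a + (n+1) = (a+n)+1 by ring, factq,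
        show 2*a + 2*(n+1) = (2*a+2*n+1)+1 by ring, factq,
        show 2*a+2*n+1 = (2*a+2*n)+1 by ring, factq]
      push_cast at ih ⊢
      linear_combination (2*((a:ℚ)+n)+1) * (2*(a:ℚ)+2*n+2) * ih

lemma prodAscEven (a n : ℕ) : (∏ j ∈ range n, (2*(a:ℚ)+2+2*j)) * (a.factorial : ℚ)
    = (2:ℚ)^n * ((a+n).factorial : ℚ) := by
  induction n with
  | zero => simp
  | succ n ih =>
      rw [prod_range_succ, show a + (n+1) = (a+n)+1 by ring, factq]
      push_cast at ih ⊢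
      linear_combination 2*((a:ℚ)+n+1) * ih

lemma prodDesc (x d : ℚ) (n : ℕ) :
    (∏ j ∈ range n, (x - d*j)) = ∏ j ∈ range n, (x - d*((n:ℚ)-1) + d*j) := by
  rw [← Finset.prod_range_reflect]
  refine Finset.prod_congr rfl (fun j hj => ?_)
  have hj' : j < n := Finset.mem_range.mp hj
  have h1 : ((n - 1 - j : ℕ) : ℚ) = (n:ℚ) - 1 - j := by
    have : (n - 1 - j : ℕ) = n - (1 + j) := by omega
    rw [this, Nat.cast_sub (by omega)]
    push_cast; ring
  rw [h1]; ring

lemma prodDesc1 (a n : ℕ) : (∏ j ∈ range n, ((a:ℚ)+n - j)) * (a.factorial : ℚ)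
    = ((a+n).factorial : ℚ) := by
  have e1 : (∏ j ∈ range n, ((a:ℚ)+n - j)) = ∏ j ∈ range n, ((a:ℚ)+1+j) := by
    rw [show (∏ j ∈ range n, ((a:ℚ)+n - j)) = ∏ j ∈ range n, (((a:ℚ)+n) - 1*j) from
      prod_congr rfl fun j _ => by ring, prodDesc]
    exact prod_congr rfl fun j _ => by ring
  rw [e1]; exact prodAsc a n

lemma prodDescOdd (a n : ℕ) : (∏ j ∈ range n, (2*(a:ℚ)+2*n-1-2*j)) *
    ((2:ℚ)^n * (((a+n).factorial : ℚ)) * (((2*a).factorial : ℚ)))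
    = ((2*a+2*n).factorial : ℚ) * (a.factorial : ℚ) := by
  have e1 : (∏ j ∈ range n, (2*(a:ℚ)+2*n-1-2*j)) = ∏ j ∈ range n, (2*(a:ℚ)+1+2*j) := by
    rw [show (∏ j ∈ range n, (2*(a:ℚ)+2*n-1-2*j))
        = ∏ j ∈ range n, ((2*(a:ℚ)+2*n-1) - 2*j) from prod_congr rfl fun j _ => by ring,
      prodDesc]
    exact prod_congr rfl fun j _ => by ring
  rw [e1]; exact prodAscOdd a n

lemma prodDescEven (a n : ℕ) : (∏ j ∈ range n, (2*(a:ℚ)+2*n-2*j)) * (a.factorial : ℚ)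
    = (2:ℚ)^n * ((a+n).factorial : ℚ) := by
  have e1 : (∏ j ∈ range n, (2*(a:ℚ)+2*n-2*j)) = ∏ j ∈ range n, (2*(a:ℚ)+2+2*j) := by
    rw [show (∏ j ∈ range n, (2*(a:ℚ)+2*n-2*j))
        = ∏ j ∈ range n, ((2*(a:ℚ)+2*n) - 2*j) from prod_congr rfl fun j _ => by ring,
      prodDesc]
    exact prod_congr rfl fun j _ => by ring
  rw [e1]; exact prodAscEven a n

def numQ (x : ℚ) (s : ℕ) : ℚ :=
  ∏ a ∈ range (s+1), ∏ b ∈ range a, (x^2 - (2*((1:ℚ)+a+b))^2)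

def denQ (x : ℚ) (s : ℕ) : ℚ :=
  ∏ l ∈ range s, (x^2 - (2*(l:ℚ)+1)^2)^(s-l)

lemma SOdd_eq (L s : ℕ) : SOdd L s = numQ (L:ℚ) s / denQ (L:ℚ) s := by
  unfold SOdd numQ denQ
  congr 1
  rw [← Finset.Ico_add_one_right_eq_Icc, prod_Ico_eq_prod_range]
  refine prod_congr (by congr 1) fun a _ => ?_
  rw [← Finset.Ico_add_one_right_eq_Icc, prod_Ico_eq_prod_range]
  refine prod_congr (by congr 1; omega) fun b _ => ?_
  push_cast; ring

lemma numQ_succ (x : ℚ) (s : ℕ) : numQ x (s+1)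
    = numQ x s * ∏ b ∈ range (s+1), (x^2 - (2*((s:ℚ)+2+b))^2) := by
  unfold numQ
  rw [prod_range_succ]
  congr 1
  refine prod_congr rfl fun b _ => ?_
  push_cast; ring

lemma denQ_succ (x : ℚ) (s : ℕ) : denQ x (s+1)
    = denQ x s * ∏ l ∈ range (s+1), (x^2 - (2*(l:ℚ)+1)^2) := by
  unfold denQ
  rw [show (∏ l ∈ range (s+1), (x^2 - (2*(l:ℚ)+1)^2)^(s+1-l))
      = ∏ l ∈ range (s+1), ((x^2 - (2*(l:ℚ)+1)^2)^(s-l) * (x^2 - (2*(l:ℚ)+1)^2)) from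
    prod_congr rfl fun l hl => by
      rw [← pow_succ]; congr 1; have := mem_range.mp hl; omega,
    prod_mul_distrib, prod_range_succ, Nat.sub_self, pow_zero, mul_one]

lemma num_ratio (m : ℚ) (s : ℕ) :
    numQ (2*m+2) s * ((∏ j ∈ range s, (m-2-2*j)) * ∏ j ∈ range s, (m+2+j))
    = numQ (2*m) s * ((∏ j ∈ range s, (m-1-j)) * ∏ j ∈ range s, (m+3+2*j)) := by
  induction s with
  | zero => simp [numQ]
  | succ s ih =>
      have hA' : (∏ b ∈ range (s+1), ((2*m+2)^2 - (2*((s:ℚ)+2+b))^2))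
          = (4:ℚ)^(s+1) * (((m-1-s) * ∏ b ∈ range s, (m-2-s-b)) *
            ((∏ b ∈ range s, (m+3+s+b)) * (m+3+2*s))) := by
        rw [show (∏ b ∈ range (s+1), ((2*m+2)^2 - (2*((s:ℚ)+2+b))^2))
            = ∏ b ∈ range (s+1), (4 * ((m-1-s-b) * (m+3+s+b))) from
          prod_congr rfl fun b _ => by ring, prod_mul_distrib, prod_mul_distrib,
          prod_const, card_range]
        rw [prod_range_succ' (f := fun b => m-1-s-(b:ℚ)), prod_range_succ]
        rw [show (∏ b ∈ range s, (m-1-(s:ℚ)-((b+1 : ℕ):ℚ))) = ∏ b ∈ range s, (m-2-s-b) from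
          prod_congr rfl fun b _ => by push_cast; ring]
        push_cast; ring
      have hA : (∏ b ∈ range (s+1), ((2*m)^2 - (2*((s:ℚ)+2+b))^2))
          = (4:ℚ)^(s+1) * (((∏ b ∈ range s, (m-2-s-b)) * (m-2-2*s)) *
            ((m+2+s) * ∏ b ∈ range s, (m+3+s+b))) := by
        rw [show (∏ b ∈ range (s+1), ((2*m)^2 - (2*((s:ℚ)+2+b))^2))
            = ∏ b ∈ range (s+1), (((m-2-s-b) * (m+2+s+b)) * 4) from
          prod_congr rfl fun b _ => by ring, prod_mul_distrib, prod_mul_distrib,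
          prod_const, card_range]
        rw [prod_range_succ (f := fun b => m-2-s-(b:ℚ)),
          prod_range_succ' (f := fun b => m+2+s+(b:ℚ))]
        rw [show (∏ b ∈ range s, (m+2+(s:ℚ)+((b+1 : ℕ):ℚ))) = ∏ b ∈ range s, (m+3+s+b) from
          prod_congr rfl fun b _ => by push_cast; ring]
        push_cast; ring
      rw [numQ_succ, numQ_succ, hA', hA,
        prod_range_succ (f := fun j => m-2-2*(j:ℚ)),
        prod_range_succ (f := fun j => m+2+(j:ℚ)),
        prod_range_succ (f := fun j => m-1-(j:ℚ)),
        prod_range_succ (f := fun j => m+3+2*(j:ℚ))]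
      linear_combination ((4:ℚ)^(s+1) * (m-1-s) * (∏ b ∈ range s, (m-2-s-b)) *
        (∏ b ∈ range s, (m+3+s+b)) * (m+3+2*s) * (m-2-2*s) * (m+2+s)) * ih

lemma den_ratio (m : ℚ) (s : ℕ) :
    denQ (2*m+2) s * (∏ j ∈ range s, (2*m-1-2*j))
    = denQ (2*m) s * (∏ j ∈ range s, (2*m+3+2*j)) := by
  induction s with
  | zero => simp [denQ]
  | succ s ih =>
      have hQ' : (∏ l ∈ range (s+1), ((2*m+2)^2 - (2*(l:ℚ)+1)^2))
          = ((2*m+1) * ∏ l ∈ range s, (2*m-1-2*l)) *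
            ((∏ l ∈ range s, (2*m+3+2*l)) * (2*m+3+2*s)) := by
        rw [show (∏ l ∈ range (s+1), ((2*m+2)^2 - (2*(l:ℚ)+1)^2))
            = ∏ l ∈ range (s+1), ((2*m+1-2*l) * (2*m+3+2*l)) from
          prod_congr rfl fun l _ => by ring, prod_mul_distrib,
          prod_range_succ' (f := fun l => 2*m+1-2*(l:ℚ)),
          prod_range_succ (f := fun l => 2*m+3+2*(l:ℚ))]
        rw [show (∏ l ∈ range s, (2*m+1-2*((l+1 : ℕ):ℚ))) = ∏ l ∈ range s, (2*m-1-2*l) from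
          prod_congr rfl fun l _ => by push_cast; ring]
        push_cast; ring
      have hQ : (∏ l ∈ range (s+1), ((2*m)^2 - (2*(l:ℚ)+1)^2))
          = ((∏ l ∈ range s, (2*m-1-2*l)) * (2*m-1-2*s)) *
            ((2*m+1) * ∏ l ∈ range s, (2*m+3+2*l)) := by
        rw [show (∏ l ∈ range (s+1), ((2*m)^2 - (2*(l:ℚ)+1)^2))
            = ∏ l ∈ range (s+1), ((2*m-1-2*l) * (2*m+1+2*l)) from
          prod_congr rfl fun l _ => by ring, prod_mul_distrib,
          prod_range_succ (f := fun l => 2*m-1-2*(l:ℚ)),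
          prod_range_succ' (f := fun l => 2*m+1+2*(l:ℚ))]
        rw [show (∏ l ∈ range s, (2*m+1+2*((l+1 : ℕ):ℚ))) = ∏ l ∈ range s, (2*m+3+2*l) from
          prod_congr rfl fun l _ => by push_cast; ring]
        push_cast; ring
      rw [denQ_succ, denQ_succ, hQ', hQ,
        prod_range_succ (f := fun j => 2*m-1-2*(j:ℚ)),
        prod_range_succ (f := fun j => 2*m+3+2*(j:ℚ))]
      linear_combination ((2*m+1) * (2*m+3+2*s) * (2*m-1-2*s) *
        (∏ l ∈ range s, (2*m-1-2*l)) * (∏ l ∈ range s, (2*m+3+2*l))) * ih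

lemma denQ_pos (x : ℚ) (s : ℕ) (h : (s:ℚ) ≤ x) : 0 < denQ (2*x) s := by
  unfold denQ
  refine prod_pos fun l hl => pow_pos ?_ _
  have hl' : (l:ℚ) + 1 ≤ s := by
    have := mem_range.mp hl; exact_mod_cast Nat.succ_le_of_lt this
  nlinarith

lemma numQ_pos (x : ℚ) (s : ℕ) (h : 2*(s:ℚ) < x) : 0 < numQ (2*x) s := by
  unfold numQ
  refine prod_pos fun a ha => prod_pos fun b hb => ?_
  have ha' : (a:ℚ) ≤ s := by
    have := mem_range.mp ha; exact_mod_cast Nat.lt_succ_iff.mp this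
  have hb' : (b:ℚ) + 1 ≤ a := by
    have := mem_range.mp hb; exact_mod_cast Nat.succ_le_of_lt this
  have hs : (0:ℚ) ≤ s := by positivity
  nlinarith

lemma SOdd_step (m s : ℕ) (hm : 2*s+1 ≤ m) :
    SOdd (2*(m+1)) s * ((∏ j ∈ range s, ((m:ℚ)-2-2*j)) * (∏ j ∈ range s, ((m:ℚ)+2+j))
      * (∏ j ∈ range s, (2*(m:ℚ)+3+2*j)))
    = SOdd (2*m) s * ((∏ j ∈ range s, ((m:ℚ)-1-j)) * (∏ j ∈ range s, ((m:ℚ)+3+2*j))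
      * (∏ j ∈ range s, (2*(m:ℚ)-1-2*j))) := by
  have hmq : (2*(s:ℚ)+1) ≤ (m:ℚ) := by exact_mod_cast hm
  have h1 : ((2*(m+1):ℕ):ℚ) = 2*((m:ℚ)+1) := by push_cast; ring
  have h2 : ((2*m:ℕ):ℚ) = 2*(m:ℚ) := by push_cast; ring
  rw [SOdd_eq, SOdd_eq, h1, h2]
  have hd : denQ (2*(m:ℚ)) s ≠ 0 := ne_of_gt (denQ_pos _ _ (by linarith))
  have hd' : denQ (2*((m:ℚ)+1)) s ≠ 0 := ne_of_gt (denQ_pos _ _ (by linarith))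
  have e1 := num_ratio (m:ℚ) s
  have e2 := den_ratio (m:ℚ) s
  rw [show (2*((m:ℚ)+1)) = 2*(m:ℚ)+2 from by ring] at hd' ⊢
  rw [div_mul_eq_mul_div, div_mul_eq_mul_div, div_eq_div_iff hd' hd]
  linear_combination ((∏ j ∈ range s, (2*(m:ℚ)+3+2*j)) * denQ (2*(m:ℚ)) s) * e1
    - (numQ (2*(m:ℚ)) s * (∏ j ∈ range s, ((m:ℚ)-1-j)) *
      (∏ j ∈ range s, ((m:ℚ)+3+2*j))) * e2

lemma SOdd_pos (m s : ℕ) (h : 2*s+1 ≤ m) : 0 < SOdd (2*m) s := by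
  rw [SOdd_eq, show ((2*m:ℕ):ℚ) = 2*(m:ℚ) from by push_cast; ring]
  have h' : 2*(s:ℚ) < (m:ℚ) := by
    have : 2*s < m := by omega
    exact_mod_cast this
  exact div_pos (numQ_pos _ _ h') (denQ_pos _ _ (by linarith))

lemma factpos (n : ℕ) : (0:ℚ) < (n.factorial : ℚ) := by
  exact_mod_cast n.factorial_pos

lemma ASM_pos (n : ℕ) : 0 < ASM n := by
  unfold ASM
  exact Finset.prod_pos fun k _ => div_pos (factpos _) (factpos _)

lemma ASM_succ (n : ℕ) : ASM (n+1) * (((2*n+1).factorial:ℚ) * ((2*n).factorial:ℚ))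
    = ASM n * (((3*n+1).factorial:ℚ) * ((n.factorial:ℚ))) := by
  have key : (∏ k ∈ Finset.range n, (((n+1+k).factorial:ℚ))) * (n.factorial:ℚ)
      = (∏ k ∈ Finset.range n, (((n+k).factorial:ℚ))) * ((2*n).factorial:ℚ) := by
    have h2 := Finset.prod_range_succ' (fun k => (((n+k).factorial:ℚ))) n
    rw [Finset.prod_range_succ] at h2
    rw [show (∏ k ∈ Finset.range n, (((n+(k+1)).factorial:ℚ)))
        = ∏ k ∈ Finset.range n, (((n+1+k).factorial:ℚ)) from
      Finset.prod_congr rfl fun k _ => by rw [show n+(k+1) = n+1+k from by ring]] at h2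
    rw [show n+0 = n from rfl, show n+n = 2*n from by ring] at h2
    linarith [h2]
  unfold ASM
  rw [Finset.prod_div_distrib, Finset.prod_div_distrib,
    Finset.prod_range_succ (f := fun k => ((3*k+1).factorial:ℚ)),
    Finset.prod_range_succ (f := fun k => (((n+1+k).factorial:ℚ))),
    show n+1+n = 2*n+1 from by ring]
  have hne1 : (∏ k ∈ Finset.range n, (((n+k).factorial:ℚ))) ≠ 0 :=
    Finset.prod_ne_zero_iff.mpr fun k _ => factne _
  have hne2 : (∏ k ∈ Finset.range n, (((n+1+k).factorial:ℚ))) ≠ 0 :=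
    Finset.prod_ne_zero_iff.mpr fun k _ => factne _
  field_simp
  linear_combination (-1:ℚ) * key

lemma baseCase (s : ℕ) :
    (2:ℚ)^(2*s+1) * (ASM (2*s+1) * SOdd (2*(2*s+1)) s)
    = ASM (2*s+2) * SOdd (2*(2*s+2)) s := by
  have hstep := SOdd_step (2*s+1) s (by omega)
  rw [show 2*s+1+1 = 2*s+2 from by ring] at hstep
  have hasm := ASM_succ (2*s+1)
  rw [show 2*s+1+1 = 2*s+2 from by ring, show 2*(2*s+1)+1 = 4*s+3 from by ring,
    show 2*(2*s+1) = 4*s+2 from by ring, show 3*(2*s+1)+1 = 6*s+4 from by ring] at hasm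
-- conversions for m = 2*s+1
  have e1 : (∏ j ∈ range s, (((2*s+1:ℕ):ℚ)-2-2*(j:ℚ)))
      = ((2*s).factorial:ℚ) / (2^s * (s.factorial:ℚ)) := by
    rw [eq_div_iff (by positivity)]
    have h := prodDescOdd 0 s
    rw [show (0:ℕ)+s = s from by ring, show 2*(0:ℕ)+2*s = 2*s from by ring,
      show 2*(0:ℕ) = 0 from by ring] at h
    rw [show (∏ j ∈ range s, (2*(((0:ℕ)):ℚ)+2*(s:ℚ)-1-2*(j:ℚ)))
        = ∏ j ∈ range s, (((2*s+1:ℕ):ℚ)-2-2*(j:ℚ)) from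
      prod_congr rfl fun j _ => by push_cast; ring] at h
    simp only [Nat.factorial_zero, Nat.cast_one, mul_one] at h
    linear_combination h
  have e2 : (∏ j ∈ range s, (((2*s+1:ℕ):ℚ)+2+(j:ℚ)))
      = ((3*s+2).factorial:ℚ) / ((2*s+2).factorial:ℚ) := by
    rw [eq_div_iff (by positivity)]
    have h := prodAsc (2*s+2) s
    rw [show 2*s+2+s = 3*s+2 from by ring] at h
    rw [show (∏ j ∈ range s, (((2*s+2:ℕ):ℚ)+1+(j:ℚ)))
        = ∏ j ∈ range s, (((2*s+1:ℕ):ℚ)+2+(j:ℚ)) from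
      prod_congr rfl fun j _ => by push_cast; ring] at h
    linear_combination h
  have e3 : (∏ j ∈ range s, (2*((2*s+1:ℕ):ℚ)+3+2*(j:ℚ)))
      = (((6*s+4).factorial:ℚ) * ((2*s+2).factorial:ℚ))
        / (2^s * ((3*s+2).factorial:ℚ) * ((4*s+4).factorial:ℚ)) := by
    rw [eq_div_iff (by positivity)]
    have h := prodAscOdd (2*s+2) s
    rw [show 2*s+2+s = 3*s+2 from by ring, show 2*(2*s+2) = 4*s+4 from by ring,
      show 4*s+4+2*s = 6*s+4 from by ring] at h
    rw [show (∏ j ∈ range s, (2*((2*s+2:ℕ):ℚ)+1+2*(j:ℚ)))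
        = ∏ j ∈ range s, (2*((2*s+1:ℕ):ℚ)+3+2*(j:ℚ)) from
      prod_congr rfl fun j _ => by push_cast; ring] at h
    linear_combination h
  have e4 : (∏ j ∈ range s, (((2*s+1:ℕ):ℚ)-1-(j:ℚ)))
      = ((2*s).factorial:ℚ) / (s.factorial:ℚ) := by
    rw [eq_div_iff (by positivity)]
    have h := prodDesc1 s s
    rw [show s+s = 2*s from by ring] at h
    rw [show (∏ j ∈ range s, (((s:ℕ):ℚ)+(s:ℚ)-(j:ℚ)))
        = ∏ j ∈ range s, (((2*s+1:ℕ):ℚ)-1-(j:ℚ)) from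
      prod_congr rfl fun j _ => by push_cast; ring] at h
    linear_combination h
  have e5 : (∏ j ∈ range s, (((2*s+1:ℕ):ℚ)+3+2*(j:ℚ)))
      = 2^s * ((2*s+1).factorial:ℚ) / ((s+1).factorial:ℚ) := by
    rw [eq_div_iff (by positivity)]
    have h := prodAscEven (s+1) s
    rw [show s+1+s = 2*s+1 from by ring] at h
    rw [show (∏ j ∈ range s, (2*((s+1:ℕ):ℚ)+2+2*(j:ℚ)))
        = ∏ j ∈ range s, (((2*s+1:ℕ):ℚ)+3+2*(j:ℚ)) from
      prod_congr rfl fun j _ => by push_cast; ring] at h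
    linear_combination h
  have e6 : (∏ j ∈ range s, (2*((2*s+1:ℕ):ℚ)-1-2*(j:ℚ)))
      = (((4*s+2).factorial:ℚ) * ((s+1).factorial:ℚ))
        / (2^s * ((2*s+1).factorial:ℚ) * ((2*s+2).factorial:ℚ)) := by
    rw [eq_div_iff (by positivity)]
    have h := prodDescOdd (s+1) s
    rw [show s+1+s = 2*s+1 from by ring, show 2*(s+1) = 2*s+2 from by ring,
      show 2*s+2+2*s = 4*s+2 from by ring] at h
    rw [show (∏ j ∈ range s, (2*((s+1:ℕ):ℚ)+2*(s:ℚ)-1-2*(j:ℚ)))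
        = ∏ j ∈ range s, (2*((2*s+1:ℕ):ℚ)-1-2*(j:ℚ)) from
      prod_congr rfl fun j _ => by push_cast; ring] at h
    linear_combination h
  rw [e1, e2, e3, e4, e5, e6] at hstep
  have hS1 : (0:ℚ) < SOdd (2*(2*s+1)) s := SOdd_pos (2*s+1) s (by omega)
  have hS2 : SOdd (2*(2*s+2)) s
      = SOdd (2*(2*s+1)) s * (((2*s).factorial:ℚ) / (s.factorial:ℚ)
        * (2^s * ((2*s+1).factorial:ℚ) / ((s+1).factorial:ℚ))
        * ((((4*s+2).factorial:ℚ) * ((s+1).factorial:ℚ))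
          / (2^s * ((2*s+1).factorial:ℚ) * ((2*s+2).factorial:ℚ))))
      / (((2*s).factorial:ℚ) / (2^s * (s.factorial:ℚ))
        * (((3*s+2).factorial:ℚ) / ((2*s+2).factorial:ℚ))
        * ((((6*s+4).factorial:ℚ) * ((2*s+2).factorial:ℚ))
          / (2^s * ((3*s+2).factorial:ℚ) * ((4*s+4).factorial:ℚ)))) := by
    rw [eq_div_iff (by positivity)]
    linear_combination hstep
  have hA2 : ASM (2*s+2) = ASM (2*s+1) * (((6*s+4).factorial:ℚ) * ((2*s+1).factorial:ℚ))
      / (((4*s+3).factorial:ℚ) * ((4*s+2).factorial:ℚ)) := by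
    rw [eq_div_iff (by positivity)]
    linear_combination hasm
  rw [hS2, hA2]
  rw [show ((4*s+4).factorial:ℚ) = (4*(s:ℚ)+4) * ((4*s+3).factorial:ℚ) from by
      rw [show 4*s+4 = (4*s+3)+1 from by ring, factq]; push_cast; ring,
    show ((2*s+2).factorial:ℚ) = (2*(s:ℚ)+2) * ((2*s+1).factorial:ℚ) from by
      rw [show 2*s+2 = (2*s+1)+1 from by ring, factq]; push_cast; ring]
  field_simp
  ring

lemma keyId (s t : ℕ) :
    ((2*s+2*t+1).factorial:ℚ) * ((t).factorial:ℚ) * ((4*s+4*t+6).factorial:ℚ) * ((s+2*t+3).factorial:ℚ) * ((s+t+1).factorial:ℚ) *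
      ((2*t+2).factorial:ℚ) * ((4*s+4*t+8).factorial:ℚ) * ((2*s+4*t+3).factorial:ℚ) * ((2*s+4*t+5).factorial:ℚ)
    = ((s+2*t+1).factorial:ℚ) * ((2*s+2*t+4).factorial:ℚ) * ((2*s+4*t+4).factorial:ℚ) * ((s+t).factorial:ℚ) * ((2*s+4*t+6).factorial:ℚ) *
      ((t+1).factorial:ℚ) * ((4*s+4*t+5).factorial:ℚ) * ((4*s+4*t+7).factorial:ℚ) * ((2*t+1).factorial:ℚ) := by
  rw [show ((2*s+2*t+4).factorial:ℚ) = (2*(s:ℚ)+2*t+4) * ((2*s+2*t+3).factorial:ℚ) from by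
      rw [show 2*s+2*t+4 = 2*s+2*t+3+1 from by ring, factq]; push_cast; try ring,
    show ((2*s+2*t+3).factorial:ℚ) = (2*(s:ℚ)+2*t+3) * ((2*s+2*t+2).factorial:ℚ) from by
      rw [show 2*s+2*t+3 = 2*s+2*t+2+1 from by ring, factq]; push_cast; try ring,
    show ((2*s+2*t+2).factorial:ℚ) = (2*(s:ℚ)+2*t+2) * ((2*s+2*t+1).factorial:ℚ) from by
      rw [show 2*s+2*t+2 = 2*s+2*t+1+1 from by ring, factq]; push_cast; try ring,
    show ((t+1).factorial:ℚ) = ((t:ℚ)+1) * ((t).factorial:ℚ) from by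
      first | (push_cast [Nat.factorial_succ]; ring) | push_cast [Nat.factorial_succ],
    show ((2*s+4*t+4).factorial:ℚ) = (2*(s:ℚ)+4*t+4) * ((2*s+4*t+3).factorial:ℚ) from by
      rw [show 2*s+4*t+4 = 2*s+4*t+3+1 from by ring, factq]; push_cast; try ring,
    show ((2*s+4*t+6).factorial:ℚ) = (2*(s:ℚ)+4*t+6) * ((2*s+4*t+5).factorial:ℚ) from by
      rw [show 2*s+4*t+6 = 2*s+4*t+5+1 from by ring, factq]; push_cast; try ring,
    show ((4*s+4*t+6).factorial:ℚ) = (4*(s:ℚ)+4*t+6) * ((4*s+4*t+5).factorial:ℚ) from by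
      rw [show 4*s+4*t+6 = 4*s+4*t+5+1 from by ring, factq]; push_cast; try ring,
    show ((4*s+4*t+8).factorial:ℚ) = (4*(s:ℚ)+4*t+8) * ((4*s+4*t+7).factorial:ℚ) from by
      rw [show 4*s+4*t+8 = 4*s+4*t+7+1 from by ring, factq]; push_cast; try ring,
    show ((s+2*t+3).factorial:ℚ) = ((s:ℚ)+2*t+3) * ((s+2*t+2).factorial:ℚ) from by
      rw [show s+2*t+3 = s+2*t+2+1 from by ring, factq]; push_cast; try ring,
    show ((s+2*t+2).factorial:ℚ) = ((s:ℚ)+2*t+2) * ((s+2*t+1).factorial:ℚ) from by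
      rw [show s+2*t+2 = s+2*t+1+1 from by ring, factq]; push_cast; try ring,
    show ((s+t+1).factorial:ℚ) = ((s:ℚ)+(t:ℚ)+1) * ((s+t).factorial:ℚ) from by
      rw [show s+t+1 = s+t+1 from by ring, factq]; push_cast; try ring,
    show ((2*t+2).factorial:ℚ) = (2*(t:ℚ)+2) * ((2*t+1).factorial:ℚ) from by
      rw [show 2*t+2 = 2*t+1+1 from by ring, factq]; push_cast; try ring]
  ring

set_option maxHeartbeats 1000000 in
lemma stepCase (s t : ℕ) :
    ASM (2*s+2*t+4) * SOdd (2*(2*s+2*t+4)) s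
    = (ASM (2*s+2*t+2) * SOdd (2*(2*s+2*t+2)) s) *
      ( ((6*s+6*t+7).factorial:ℚ) / (((6*s+4*t+6).factorial:ℚ) * ((2*s+4*t+3).factorial:ℚ))
      * (((6*s+6*t+10).factorial:ℚ) / (((6*s+4*t+8).factorial:ℚ) * ((2*s+4*t+5).factorial:ℚ)))
      * (((4*s+2*t+4).factorial:ℚ) * ((2*t+1).factorial:ℚ)) ) := by
  have hstep1 := SOdd_step (2*s+2*t+2) s (by omega)
  rw [show 2*s+2*t+2+1 = 2*s+2*t+3 from by ring] at hstep1
  have hstep2 := SOdd_step (2*s+2*t+3) s (by omega)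
  rw [show 2*s+2*t+3+1 = 2*s+2*t+4 from by ring] at hstep2
  have hasm1 := ASM_succ (2*s+2*t+2)
  rw [show 2*s+2*t+2+1 = 2*s+2*t+3 from by ring, show 2*(2*s+2*t+2)+1 = 4*s+4*t+5 from by ring,
    show 2*(2*s+2*t+2) = 4*s+4*t+4 from by ring,
    show 3*(2*s+2*t+2)+1 = 6*s+6*t+7 from by ring] at hasm1
  have hasm2 := ASM_succ (2*s+2*t+3)
  rw [show 2*s+2*t+3+1 = 2*s+2*t+4 from by ring, show 2*(2*s+2*t+3)+1 = 4*s+4*t+7 from by ring,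
    show 2*(2*s+2*t+3) = 4*s+4*t+6 from by ring,
    show 3*(2*s+2*t+3)+1 = 6*s+6*t+10 from by ring] at hasm2
  have f1 : (∏ j ∈ range s, (((2*s+2*t+2:ℕ):ℚ)-2-2*(j:ℚ))) = 2^s * ((s+t).factorial:ℚ) / ((t).factorial:ℚ) := by
    rw [eq_div_iff (by positivity)]
    have h := prodDescEven t s
    rw [show t+s = s+t from by ring] at h
    rw [show (∏ j ∈ range s, (2*((t:ℕ):ℚ)+2*(s:ℚ)-2*(j:ℚ))) = ∏ j ∈ range s, (((2*s+2*t+2:ℕ):ℚ)-2-2*(j:ℚ)) from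
      prod_congr rfl fun j _ => by push_cast; ring] at h
    linear_combination h
  have f2 : (∏ j ∈ range s, (((2*s+2*t+2:ℕ):ℚ)+2+(j:ℚ))) = ((3*s+2*t+3).factorial:ℚ) / ((2*s+2*t+3).factorial:ℚ) := by
    rw [eq_div_iff (by positivity)]
    have h := prodAsc (2*s+2*t+3) s
    rw [show 2*s+2*t+3+s = 3*s+2*t+3 from by ring] at h
    rw [show (∏ j ∈ range s, (((2*s+2*t+3:ℕ):ℚ)+1+(j:ℚ))) = ∏ j ∈ range s, (((2*s+2*t+2:ℕ):ℚ)+2+(j:ℚ)) from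
      prod_congr rfl fun j _ => by push_cast; ring] at h
    linear_combination h
  have f3 : (∏ j ∈ range s, (2*((2*s+2*t+2:ℕ):ℚ)+3+2*(j:ℚ))) = ((6*s+4*t+6).factorial:ℚ) * ((2*s+2*t+3).factorial:ℚ) / (2^s * ((3*s+2*t+3).factorial:ℚ) * ((4*s+4*t+6).factorial:ℚ)) := by
    rw [eq_div_iff (by positivity)]
    have h := prodAscOdd (2*s+2*t+3) s
    rw [show 2*(2*s+2*t+3) = 4*s+4*t+6 from by ring, show 2*s+2*t+3+s = 3*s+2*t+3 from by ring, show 4*s+4*t+6+2*s = 6*s+4*t+6 from by ring] at h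
    rw [show (∏ j ∈ range s, (2*((2*s+2*t+3:ℕ):ℚ)+1+2*(j:ℚ))) = ∏ j ∈ range s, (2*((2*s+2*t+2:ℕ):ℚ)+3+2*(j:ℚ)) from
      prod_congr rfl fun j _ => by push_cast; ring] at h
    linear_combination h
  have f4 : (∏ j ∈ range s, (((2*s+2*t+2:ℕ):ℚ)-1-(j:ℚ))) = ((2*s+2*t+1).factorial:ℚ) / ((s+2*t+1).factorial:ℚ) := by
    rw [eq_div_iff (by positivity)]
    have h := prodDesc1 (s+2*t+1) s
    rw [show s+2*t+1+s = 2*s+2*t+1 from by ring] at h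
    rw [show (∏ j ∈ range s, (((s+2*t+1:ℕ):ℚ)+(s:ℚ)-(j:ℚ))) = ∏ j ∈ range s, (((2*s+2*t+2:ℕ):ℚ)-1-(j:ℚ)) from
      prod_congr rfl fun j _ => by push_cast; ring] at h
    linear_combination h
  have f5 : (∏ j ∈ range s, (((2*s+2*t+2:ℕ):ℚ)+3+2*(j:ℚ))) = ((4*s+2*t+4).factorial:ℚ) * ((s+t+2).factorial:ℚ) / (2^s * ((2*s+t+2).factorial:ℚ) * ((2*s+2*t+4).factorial:ℚ)) := by
    rw [eq_div_iff (by positivity)]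
    have h := prodAscOdd (s+t+2) s
    rw [show 2*(s+t+2) = 2*s+2*t+4 from by ring, show s+t+2+s = 2*s+t+2 from by ring, show 2*s+2*t+4+2*s = 4*s+2*t+4 from by ring] at h
    rw [show (∏ j ∈ range s, (2*((s+t+2:ℕ):ℚ)+1+2*(j:ℚ))) = ∏ j ∈ range s, (((2*s+2*t+2:ℕ):ℚ)+3+2*(j:ℚ)) from
      prod_congr rfl fun j _ => by push_cast; ring] at h
    linear_combination h
  have f6 : (∏ j ∈ range s, (2*((2*s+2*t+2:ℕ):ℚ)-1-2*(j:ℚ))) = ((4*s+4*t+4).factorial:ℚ) * ((s+2*t+2).factorial:ℚ) / (2^s * ((2*s+2*t+2).factorial:ℚ) * ((2*s+4*t+4).factorial:ℚ)) := by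
    rw [eq_div_iff (by positivity)]
    have h := prodDescOdd (s+2*t+2) s
    rw [show 2*(s+2*t+2) = 2*s+4*t+4 from by ring, show s+2*t+2+s = 2*s+2*t+2 from by ring, show 2*s+4*t+4+2*s = 4*s+4*t+4 from by ring] at h
    rw [show (∏ j ∈ range s, (2*((s+2*t+2:ℕ):ℚ)+2*(s:ℚ)-1-2*(j:ℚ))) = ∏ j ∈ range s, (2*((2*s+2*t+2:ℕ):ℚ)-1-2*(j:ℚ)) from
      prod_congr rfl fun j _ => by push_cast; ring] at h
    linear_combination h
  have g1 : (∏ j ∈ range s, (((2*s+2*t+3:ℕ):ℚ)-2-2*(j:ℚ))) = ((2*s+2*t+2).factorial:ℚ) * ((t+1).factorial:ℚ) / (2^s * ((s+t+1).factorial:ℚ) * ((2*t+2).factorial:ℚ)) := by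
    rw [eq_div_iff (by positivity)]
    have h := prodDescOdd (t+1) s
    rw [show 2*(t+1) = 2*t+2 from by ring, show t+1+s = s+t+1 from by ring, show 2*t+2+2*s = 2*s+2*t+2 from by ring] at h
    rw [show (∏ j ∈ range s, (2*((t+1:ℕ):ℚ)+2*(s:ℚ)-1-2*(j:ℚ))) = ∏ j ∈ range s, (((2*s+2*t+3:ℕ):ℚ)-2-2*(j:ℚ)) from
      prod_congr rfl fun j _ => by push_cast; ring] at h
    linear_combination h
  have g2 : (∏ j ∈ range s, (((2*s+2*t+3:ℕ):ℚ)+2+(j:ℚ))) = ((3*s+2*t+4).factorial:ℚ) / ((2*s+2*t+4).factorial:ℚ) := by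
    rw [eq_div_iff (by positivity)]
    have h := prodAsc (2*s+2*t+4) s
    rw [show 2*s+2*t+4+s = 3*s+2*t+4 from by ring] at h
    rw [show (∏ j ∈ range s, (((2*s+2*t+4:ℕ):ℚ)+1+(j:ℚ))) = ∏ j ∈ range s, (((2*s+2*t+3:ℕ):ℚ)+2+(j:ℚ)) from
      prod_congr rfl fun j _ => by push_cast; ring] at h
    linear_combination h
  have g3 : (∏ j ∈ range s, (2*((2*s+2*t+3:ℕ):ℚ)+3+2*(j:ℚ))) = ((6*s+4*t+8).factorial:ℚ) * ((2*s+2*t+4).factorial:ℚ) / (2^s * ((3*s+2*t+4).factorial:ℚ) * ((4*s+4*t+8).factorial:ℚ)) := by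
    rw [eq_div_iff (by positivity)]
    have h := prodAscOdd (2*s+2*t+4) s
    rw [show 2*(2*s+2*t+4) = 4*s+4*t+8 from by ring, show 2*s+2*t+4+s = 3*s+2*t+4 from by ring, show 4*s+4*t+8+2*s = 6*s+4*t+8 from by ring] at h
    rw [show (∏ j ∈ range s, (2*((2*s+2*t+4:ℕ):ℚ)+1+2*(j:ℚ))) = ∏ j ∈ range s, (2*((2*s+2*t+3:ℕ):ℚ)+3+2*(j:ℚ)) from
      prod_congr rfl fun j _ => by push_cast; ring] at h
    linear_combination h
  have g4 : (∏ j ∈ range s, (((2*s+2*t+3:ℕ):ℚ)-1-(j:ℚ))) = ((2*s+2*t+2).factorial:ℚ) / ((s+2*t+2).factorial:ℚ) := by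
    rw [eq_div_iff (by positivity)]
    have h := prodDesc1 (s+2*t+2) s
    rw [show s+2*t+2+s = 2*s+2*t+2 from by ring] at h
    rw [show (∏ j ∈ range s, (((s+2*t+2:ℕ):ℚ)+(s:ℚ)-(j:ℚ))) = ∏ j ∈ range s, (((2*s+2*t+3:ℕ):ℚ)-1-(j:ℚ)) from
      prod_congr rfl fun j _ => by push_cast; ring] at h
    linear_combination h
  have g5 : (∏ j ∈ range s, (((2*s+2*t+3:ℕ):ℚ)+3+2*(j:ℚ))) = 2^s * ((2*s+t+2).factorial:ℚ) / ((s+t+2).factorial:ℚ) := by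
    rw [eq_div_iff (by positivity)]
    have h := prodAscEven (s+t+2) s
    rw [show s+t+2+s = 2*s+t+2 from by ring] at h
    rw [show (∏ j ∈ range s, (2*((s+t+2:ℕ):ℚ)+2+2*(j:ℚ))) = ∏ j ∈ range s, (((2*s+2*t+3:ℕ):ℚ)+3+2*(j:ℚ)) from
      prod_congr rfl fun j _ => by push_cast; ring] at h
    linear_combination h
  have g6 : (∏ j ∈ range s, (2*((2*s+2*t+3:ℕ):ℚ)-1-2*(j:ℚ))) = ((4*s+4*t+6).factorial:ℚ) * ((s+2*t+3).factorial:ℚ) / (2^s * ((2*s+2*t+3).factorial:ℚ) * ((2*s+4*t+6).factorial:ℚ)) := by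
    rw [eq_div_iff (by positivity)]
    have h := prodDescOdd (s+2*t+3) s
    rw [show 2*(s+2*t+3) = 2*s+4*t+6 from by ring, show s+2*t+3+s = 2*s+2*t+3 from by ring, show 2*s+4*t+6+2*s = 4*s+4*t+6 from by ring] at h
    rw [show (∏ j ∈ range s, (2*((s+2*t+3:ℕ):ℚ)+2*(s:ℚ)-1-2*(j:ℚ))) = ∏ j ∈ range s, (2*((2*s+2*t+3:ℕ):ℚ)-1-2*(j:ℚ)) from
      prod_congr rfl fun j _ => by push_cast; ring] at h
    linear_combination h
  rw [f1, f2, f3, f4, f5, f6] at hstep1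
  rw [g1, g2, g3, g4, g5, g6] at hstep2
  have hS2eq : SOdd (2*(2*s+2*t+3)) s = SOdd (2*(2*s+2*t+2)) s * (((2*s+2*t+1).factorial:ℚ) / ((s+2*t+1).factorial:ℚ) * (((4*s+2*t+4).factorial:ℚ) * ((s+t+2).factorial:ℚ) / (2^s * ((2*s+t+2).factorial:ℚ) * ((2*s+2*t+4).factorial:ℚ))) * (((4*s+4*t+4).factorial:ℚ) * ((s+2*t+2).factorial:ℚ) / (2^s * ((2*s+2*t+2).factorial:ℚ) * ((2*s+4*t+4).factorial:ℚ)))) / (2^s * ((s+t).factorial:ℚ) / ((t).factorial:ℚ) * (((3*s+2*t+3).factorial:ℚ) / ((2*s+2*t+3).factorial:ℚ)) * (((6*s+4*t+6).factorial:ℚ) * ((2*s+2*t+3).factorial:ℚ) / (2^s * ((3*s+2*t+3).factorial:ℚ) * ((4*s+4*t+6).factorial:ℚ)))) := by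
    rw [eq_div_iff (by positivity)]
    linear_combination hstep1
  have hS3eq : SOdd (2*(2*s+2*t+4)) s = SOdd (2*(2*s+2*t+3)) s * (((2*s+2*t+2).factorial:ℚ) / ((s+2*t+2).factorial:ℚ) * (2^s * ((2*s+t+2).factorial:ℚ) / ((s+t+2).factorial:ℚ)) * (((4*s+4*t+6).factorial:ℚ) * ((s+2*t+3).factorial:ℚ) / (2^s * ((2*s+2*t+3).factorial:ℚ) * ((2*s+4*t+6).factorial:ℚ)))) / (((2*s+2*t+2).factorial:ℚ) * ((t+1).factorial:ℚ) / (2^s * ((s+t+1).factorial:ℚ) * ((2*t+2).factorial:ℚ)) * (((3*s+2*t+4).factorial:ℚ) / ((2*s+2*t+4).factorial:ℚ)) * (((6*s+4*t+8).factorial:ℚ) * ((2*s+2*t+4).factorial:ℚ) / (2^s * ((3*s+2*t+4).factorial:ℚ) * ((4*s+4*t+8).factorial:ℚ)))) := by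
    rw [eq_div_iff (by positivity)]
    linear_combination hstep2
  have hA1eq : ASM (2*s+2*t+3) = ASM (2*s+2*t+2) *
      (((6*s+6*t+7).factorial:ℚ) * ((2*s+2*t+2).factorial:ℚ))
      / (((4*s+4*t+5).factorial:ℚ) * ((4*s+4*t+4).factorial:ℚ)) := by
    rw [eq_div_iff (by positivity)]
    linear_combination hasm1
  have hA2eq : ASM (2*s+2*t+4) = ASM (2*s+2*t+3) *
      (((6*s+6*t+10).factorial:ℚ) * ((2*s+2*t+3).factorial:ℚ))
      / (((4*s+4*t+7).factorial:ℚ) * ((4*s+4*t+6).factorial:ℚ)) := by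
    rw [eq_div_iff (by positivity)]
    linear_combination hasm2
  rw [hA2eq, hA1eq, hS3eq, hS2eq]
  have key := keyId s t
  field_simp
  linear_combination (ASM (2*s+2*t+2) * SOdd (2*(2*s+2*t+2)) s) * key
/-- p odd, r odd: Krattenthaler's formula for 𝓖_{p,r} (r odd case,
with the factor 2^p and products from i = 1) equals the Mitra–Nienhuis–de Gier–Batchelor
expression A(p+r)·S(2(p+r),p) / (A(p)·S(2p,p)), with p = 2s+1 and r = 2t+1. -/
theorem stmt11 (s t : ℕ) :
    (2 : ℚ) ^ (2 * s + 1) *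
      (∏ i ∈ Finset.Icc 1 (2 * t),
        ((3 * (2 * s + 1) + 3 * i + 1).factorial : ℚ) /
          (((3 * (2 * s + 1) + 2 * i + 1).factorial : ℚ) *
            ((2 * s + 1 + 2 * i).factorial : ℚ))) *
      ∏ i ∈ Finset.Icc 1 t,
        (((2 * (2 * s + 1) + 2 * i).factorial : ℚ) * ((2 * i - 1).factorial : ℚ)) =
    ASM (2 * s + 1 + (2 * t + 1)) * SOdd (2 * (2 * s + 1 + (2 * t + 1))) s /
      (ASM (2 * s + 1) * SOdd (2 * (2 * s + 1)) s) := by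
  induction t with
  | zero =>
      rw [show 2*s+1+(2*0+1) = 2*s+2 from by ring]
      simp only [show (2*0:ℕ) = 0 from rfl,
        Finset.Icc_eq_empty_of_lt (by norm_num : (0:ℕ) < 1), prod_empty, mul_one]
      have hne : ASM (2*s+1) * SOdd (2*(2*s+1)) s ≠ 0 :=
        ne_of_gt (mul_pos (ASM_pos _) (SOdd_pos (2*s+1) s (le_refl _)))
      rw [eq_div_iff hne]
      linear_combination baseCase s
  | succ t ih =>
      rw [show 2*s+1+(2*(t+1)+1) = 2*s+2*t+4 from by ring,
        show 2*(t+1) = 2*t+1+1 from by ring,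
        Finset.prod_Icc_succ_top (by omega : 1 ≤ 2*t+1+1),
        Finset.prod_Icc_succ_top (by omega : 1 ≤ 2*t+1),
        Finset.prod_Icc_succ_top (by omega : 1 ≤ t+1),
        show 3*(2*s+1)+3*(2*t+1+1)+1 = 6*s+6*t+10 from by ring,
        show 3*(2*s+1)+2*(2*t+1+1)+1 = 6*s+4*t+8 from by ring,
        show 2*s+1+2*(2*t+1+1) = 2*s+4*t+5 from by ring,
        show 3*(2*s+1)+3*(2*t+1)+1 = 6*s+6*t+7 from by ring,
        show 3*(2*s+1)+2*(2*t+1)+1 = 6*s+4*t+6 from by ring,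
        show 2*s+1+2*(2*t+1) = 2*s+4*t+3 from by ring,
        show 2*(2*s+1)+2*(t+1) = 4*s+2*t+4 from by ring,
        show 2*(t+1)-1 = 2*t+1 from by omega]
      rw [show 2*s+1+(2*t+1) = 2*s+2*t+2 from by ring] at ih
      rw [stepCase s t, mul_div_right_comm, ← ih]
      ring
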